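/- Let S be a free numerical semigroup generated by a telescopic sequence T = (t_0, …, t_k) with gcd(T) = 1, let c(T) = (c_1, …, c_k), and set c_0 = 1. Let m = min{0 ≤ i ≤ k : t_i is odd} and I = {0 ≤ i ≤ k : t_i is even}. Then O(G(S)) − E(G(S)) = −1/2 + (c_m t_m)/(2 t_0) · ∏_{i ∈ I} c_i; equivalently, 2 t_0 (O(G(S)) − E(G(S))) = −t_0 + c_m t_m ∏_{i ∈ I} c_i. -/

import Mathlib

/-- The monoid `⟨t_0, …, t_{n-1}⟩` of all nonnegative integer linear combinations of
the first `n` terms of the sequence `t`. -/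
def genBy (t : ℕ → ℕ) (n : ℕ) : Set ℕ :=
  {s | ∃ x : ℕ → ℕ, s = ∑ i ∈ Finset.range n, x i * t i}

/-- `d_i = gcd(t_0, …, t_i)`. -/
def seqD (t : ℕ → ℕ) (i : ℕ) : ℕ := Finset.gcd (Finset.range (i + 1)) t

/-- `c_j = d_{j-1} / d_j` (for `j ≥ 1`). -/
def seqC (t : ℕ → ℕ) (j : ℕ) : ℕ := seqD t (j - 1) / seqD t j

/-- The sequence `(t_0, …, t_k)` of positive integers is telescopic if
`c_j · t_j ∈ ⟨t_0, …, t_{j-1}⟩` for every `j = 1, …, k`. -/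
def IsTelescopic (t : ℕ → ℕ) (k : ℕ) : Prop :=
  (∀ i ≤ k, 0 < t i) ∧ ∀ j, 1 ≤ j → j ≤ k → seqC t j * t j ∈ genBy t j

/-- `O(T)`: the number of odd elements of `T`. -/
noncomputable def countOdd (T : Set ℕ) : ℕ := {x ∈ T | Odd x}.ncard

/-- `E(T)`: the number of even elements of `T`. -/
noncomputable def countEven (T : Set ℕ) : ℕ := {x ∈ T | Even x}.ncard


open Finset

-- (-1)^(a-b) * (-1)^b = (-1)^a for b ≤ a
lemma np_sub {a b : ℕ} (h : b ≤ a) : ((-1:ℤ))^(a-b) * (-1)^b = (-1)^a := by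
  rw [← pow_add, Nat.sub_add_cancel h]

lemma np_mul_self (n : ℕ) : ((-1:ℤ))^n * (-1)^n = 1 := by
  rw [← mul_pow]; norm_num

lemma np_odd_mul {T : ℕ} (hT : Odd T) (x : ℕ) : ((-1:ℤ))^(x*T) = (-1)^x := by
  rcases Nat.even_or_odd x with hx | hx
  · rw [(hx.mul_right T).neg_one_pow, hx.neg_one_pow]
  · rw [(hx.mul hT).neg_one_pow, hx.neg_one_pow]

lemma np_even_mul {T : ℕ} (hT : Even T) (x : ℕ) : ((-1:ℤ))^(x*T) = 1 := by
  exact (hT.mul_left x).neg_one_pow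

lemma sum_Icc_neg_one (N : ℕ) : 2 * ∑ j ∈ Icc 1 N, (-1:ℤ)^j = (-1)^N - 1 := by
  induction N with
  | zero => simp
  | succ n ih =>
    rw [Finset.sum_Icc_succ_top (by omega : 1 ≤ n+1), mul_add, ih, pow_succ]
    ring

lemma sum_range_neg_one (n : ℕ) :
    ∑ x ∈ range n, (-1:ℤ)^x = if Even n then 0 else 1 := by
  induction n with
  | zero => simp
  | succ m ih =>
    rw [Finset.sum_range_succ, ih]
    rcases Nat.even_or_odd m with h | h
    · simp [h, h.neg_one_pow, Nat.even_add_one, h]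
    · simp [Nat.not_even_iff_odd.mpr h, Nat.even_add_one, (Nat.not_even_iff_odd.mpr h),
        h.neg_one_pow, h]

-- floor complement: (c*T - a)/c = T - a/c - 1 when c ∤ a, a ≤ c*T
lemma floor_compl {c T a : ℕ} (hc : 0 < c) (ha : a ≤ c * T) (hna : ¬ c ∣ a) :
    (c * T - a) / c = T - a / c - 1 := by
  obtain ⟨q, r, hr, rfl⟩ : ∃ q r, r < c ∧ a = c*q + r :=
    ⟨a/c, a%c, Nat.mod_lt _ hc, by rw [Nat.div_add_mod]⟩
  have hr0 : r ≠ 0 := by rintro rfl; exact hna ⟨q, by ring⟩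
  have hq : q < T := by
    by_contra h
    have : c*T ≤ c*q := Nat.mul_le_mul_left c (by omega)
    omega
  obtain ⟨u, hu⟩ : ∃ u, T = u + q + 1 := ⟨T - q - 1, by omega⟩
  subst hu
  have h1 : c * (u + q + 1) = c*u + c*q + c := by ring
  have h2 : c * (u+q+1) - (c*q + r) = c*u + (c - r) := by omega
  rw [h2]
  have h3 : (c*u + (c-r))/c = u + (c-r)/c := Nat.mul_add_div hc _ _
  have h4 : (c*q + r)/c = q + r/c := Nat.mul_add_div hc _ _
  have h5 : (c-r)/c = 0 := Nat.div_eq_of_lt (by omega)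
  have h6 : r/c = 0 := Nat.div_eq_of_lt hr
  omega

-- pair identity
lemma pair_id {c T x : ℕ} (hc : 0 < c) (hT : 0 < T) (hco : Nat.Coprime T c)
    (hx0 : 0 < x) (hxc : x < c) :
    x*T/c + (c-x)*T/c + 1 = T := by
  have hnd : ¬ c ∣ x*T := by
    intro h
    have hd : c ∣ x := (Nat.Coprime.symm hco).dvd_of_dvd_mul_right h
    have := Nat.le_of_dvd hx0 hd
    omega
  have hle : x*T ≤ c*T := Nat.mul_le_mul_right T (le_of_lt hxc)
  have h1 : (c-x)*T = c*T - x*T := by rw [Nat.sub_mul]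
  have h2 := floor_compl hc hle hnd
  have h3 : x*T/c < T := by
    rw [Nat.div_lt_iff_lt_mul hc]
    calc x*T < c*T := Nat.mul_lt_mul_of_lt_of_le hxc (le_refl T) hT
    _ = T*c := by ring
  rw [h1, h2]
  omega

-- Gauss sum
lemma mod_sum_eq {c T : ℕ} (hc : 0 < c) (hco : Nat.Coprime T c) :
    ∑ x ∈ range c, (x*T % c) = ∑ x ∈ range c, x := by
  have hinj : Set.InjOn (fun x => x*T % c) (range c) := by
    intro x hx y hy hxy
    simp only [Finset.coe_range, Set.mem_Iio] at hx hy
    have : x ≡ y [MOD c] := Nat.ModEq.cancel_right_of_coprime hco.symm hxy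
    unfold Nat.ModEq at this
    rwa [Nat.mod_eq_of_lt hx, Nat.mod_eq_of_lt hy] at this
  have hsub : (range c).image (fun x => x*T % c) ⊆ range c := by
    intro y hy
    simp only [Finset.mem_image] at hy
    obtain ⟨x, _, rfl⟩ := hy
    exact Finset.mem_range.mpr (Nat.mod_lt _ hc)
  have hcard : ((range c).image (fun x => x*T % c)).card = (range c).card := by
    rw [Finset.card_image_of_injOn hinj]
  have himg : (range c).image (fun x => x*T % c) = range c :=
    Finset.eq_of_subset_of_card_le hsub (le_of_eq hcard.symm)
  calc ∑ x ∈ range c, (x*T % c) = ∑ y ∈ (range c).image (fun x => x*T % c), y := by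
        rw [Finset.sum_image (fun x hx y hy h => hinj hx hy h)]
    _ = ∑ x ∈ range c, x := by rw [himg]

lemma gauss_sum {c T : ℕ} (hc : 0 < c) (hT : 0 < T) (hco : Nat.Coprime T c) :
    2 * ∑ x ∈ range c, (x*T/c) = (c-1)*(T-1) := by
  have key : ∑ x ∈ range c, (c * (x*T/c) + x*T % c) = ∑ x ∈ range c, x*T := by
    apply Finset.sum_congr rfl
    intro x _
    exact Nat.div_add_mod _ _
  rw [Finset.sum_add_distrib, ← Finset.mul_sum, mod_sum_eq hc hco, ← Finset.sum_mul] at key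
  have hgauss : (∑ x ∈ range c, x) * 2 = c * (c-1) := Finset.sum_range_id_mul_two c
  set D := ∑ x ∈ range c, (x*T/c) with hD
  set G := ∑ x ∈ range c, x with hG
  -- key : c * D + G = G * T ; hgauss : G * 2 = c * (c-1)
  have hZ : (c:ℤ) * (2*D) = (c:ℤ) * ((c-1)*(T-1)) := by
    have k1 : (c:ℤ) * D + G = G * T := by exact_mod_cast key
    have k2 : (G:ℤ) * 2 = c * ((c:ℤ)-1) := by
      have : (G:ℤ) * 2 = (c:ℤ) * ((c-1:ℕ):ℤ) := by exact_mod_cast hgauss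
      rw [this]; congr 1; push_cast [Nat.cast_sub (by omega : 1 ≤ c)]; ring
    have hT1 : ((T:ℤ)-1) = ((T-1:ℕ):ℤ) := by push_cast [Nat.cast_sub (by omega : 1 ≤ T)]; ring
    have hc1 : ((c:ℤ)-1) = ((c-1:ℕ):ℤ) := by push_cast [Nat.cast_sub (by omega : 1 ≤ c)]; ring
    linear_combination 2*k1 + ((T:ℤ)-1)*k2
  have := mul_left_cancel₀ (by exact_mod_cast hc.ne' : (c:ℤ) ≠ 0) hZ
  have goal : ((2*D:ℕ):ℤ) = (((c-1)*(T-1):ℕ):ℤ) := by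
    push_cast [Nat.cast_sub (by omega : 1 ≤ c), Nat.cast_sub (by omega : 1 ≤ T)]
    push_cast at this
    linarith
  exact_mod_cast goal

lemma arith_odd {c T : ℕ} (hc0 : 0 < c) (hc : Odd c) (hT : 0 < T) (hco : Nat.Coprime T c) :
    ∑ x ∈ range c, (-1:ℤ)^(x*T) * ((-1)^(x*T/c) - 1)
      = if Even T then 1 - (c:ℤ) else 0 := by
  set f : ℕ → ℤ := fun x => (-1:ℤ)^(x*T) * ((-1)^(x*T/c) - 1) with hf
  have hsplit : ∑ x ∈ range c, f x = f 0 + ∑ x ∈ Ico 1 c, f x := by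
    rw [Finset.range_eq_Ico]
    exact Finset.sum_eq_sum_Ico_succ_bot hc0 f
  have h0 : f 0 = 0 := by simp [hf]
  -- key pair facts
  have hpair1 : ∀ x, 0 < x → x < c →
      (-1:ℤ)^((c-x)*T) * (-1)^(x*T) = (-1)^T := by
    intro x hx0 hxc
    have h1 : ((c-x)*T) + x*T = T*c := by
      rw [← Nat.add_mul]
      have : c - x + x = c := by omega
      rw [this, mul_comm]
    rw [← pow_add, h1, np_odd_mul hc T]
  have hpair2 : ∀ x, 0 < x → x < c →
      (-1:ℤ)^((c-x)*T/c) * (-1)^(x*T/c) = (-1)^(T-1) := by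
    intro x hx0 hxc
    have hp := pair_id hc0 hT hco hx0 hxc
    rw [← pow_add]
    congr 1
    omega
  rcases Nat.even_or_odd T with hTe | hTo
  · -- T even : each pair of (f x + 1) sums to 0
    have hinv : ∑ x ∈ Ico 1 c, (f x + 1) = 0 := by
      apply Finset.sum_involution (fun x _ => c - x)
      · intro x hx
        simp only [Finset.mem_Ico] at hx
        have h1 := hpair1 x hx.1 hx.2
        have h2 := hpair2 x hx.1 hx.2
        have e1 : (-1:ℤ)^(x*T) = 1 := np_even_mul hTe x
        have e2 : (-1:ℤ)^((c-x)*T) = 1 := np_even_mul hTe (c-x)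
        have hT1 : Odd (T - 1) := by
          rcases hTe with ⟨r, hr⟩
          exact Nat.odd_iff.mpr (by omega)
        have e3 : (-1:ℤ)^((c-x)*T/c) * (-1)^(x*T/c) = -1 := by
          rw [h2, hT1.neg_one_pow]
        have sq : (-1:ℤ)^(x*T/c) * (-1)^(x*T/c) = 1 := np_mul_self _
        have e4 : (-1:ℤ)^((c-x)*T/c) = -(-1)^(x*T/c) := by
          have := congrArg (· * (-1:ℤ)^(x*T/c)) e3
          simp only [mul_assoc] at this
          rw [sq] at this
          simpa using this
        simp only [hf, e1, e2, e4]
        ring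
      · intro x hx _
        simp only [Finset.mem_Ico] at hx
        have := Nat.odd_iff.mp hc
        omega
      · intro x hx
        simp only [Finset.mem_Ico] at hx ⊢
        omega
      · intro x hx
        simp only [Finset.mem_Ico] at hx
        omega
    have hcard : (Ico 1 c).card = c - 1 := by rw [Nat.card_Ico]
    have : ∑ x ∈ Ico 1 c, f x = -((c:ℤ) - 1) := by
      have := Finset.sum_add_distrib (s := Ico 1 c) (f := f) (g := fun _ => (1:ℤ)) ▸ hinv
      rw [Finset.sum_add_distrib, Finset.sum_const, hcard] at hinv
      have hc1 : ((c - 1 : ℕ) : ℤ) = (c:ℤ) - 1 := by omega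
      rw [nsmul_eq_mul] at hinv
      rw [hc1] at hinv
      linarith
    rw [hsplit, h0, this, if_pos hTe]
    ring
  · -- T odd : each pair of f sums to 0
    have hinv : ∑ x ∈ Ico 1 c, f x = 0 := by
      apply Finset.sum_involution (fun x _ => c - x)
      · intro x hx
        simp only [Finset.mem_Ico] at hx
        have h1 := hpair1 x hx.1 hx.2
        have h2 := hpair2 x hx.1 hx.2
        have e1 : (-1:ℤ)^(x*T) = (-1)^x := np_odd_mul hTo x
        have hT1 : Even (T - 1) := by
          rcases hTo with ⟨r, hr⟩
          exact Nat.even_iff.mpr (by omega)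
        have e3 : (-1:ℤ)^((c-x)*T/c) * (-1)^(x*T/c) = 1 := by
          rw [h2, hT1.neg_one_pow]
        have sq : (-1:ℤ)^(x*T/c) * (-1)^(x*T/c) = 1 := np_mul_self _
        have e4 : (-1:ℤ)^((c-x)*T/c) = (-1)^(x*T/c) := by
          have := congrArg (· * (-1:ℤ)^(x*T/c)) e3
          simp only [mul_assoc] at this
          rw [sq] at this
          simpa using this
        have sq2 : (-1:ℤ)^(x*T) * (-1)^(x*T) = 1 := np_mul_self _
        have e5 : (-1:ℤ)^((c-x)*T) = -(-1)^(x*T) := by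
          have h1' : (-1:ℤ)^((c-x)*T) * (-1)^(x*T) = -1 := by
            rw [h1, hTo.neg_one_pow]
          have := congrArg (· * (-1:ℤ)^(x*T)) h1'
          simp only [mul_assoc] at this
          rw [sq2] at this
          simpa using this
        simp only [hf, e4, e5]
        ring
      · intro x hx _
        simp only [Finset.mem_Ico] at hx
        have := Nat.odd_iff.mp hc
        omega
      · intro x hx
        simp only [Finset.mem_Ico] at hx ⊢
        omega
      · intro x hx
        simp only [Finset.mem_Ico] at hx
        omega
    rw [hsplit, h0, hinv, if_neg (by simpa using Nat.not_even_iff_odd.mpr hTo)]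
    ring

lemma card_filter_even {c : ℕ} (hc : Even c) :
    2 * ((range c).filter (fun x => Even x)).card = c := by
  obtain ⟨n, rfl⟩ : ∃ n, c = 2*n := by rcases hc with ⟨n, hn⟩; exact ⟨n, by omega⟩
  have himg : (range (2*n)).filter (fun x => Even x) = (range n).image (fun i => 2*i) := by
    ext x
    simp only [Finset.mem_filter, Finset.mem_range, Finset.mem_image, Nat.even_iff]
    constructor
    · rintro ⟨h1, h2⟩
      exact ⟨x/2, by omega, by omega⟩
    · rintro ⟨a, ha, rfl⟩
      omega
  rw [himg, Finset.card_image_of_injective _ (fun a b h => by omega), Finset.card_range]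

lemma arith_even {c T : ℕ} (hc0 : 0 < c) (hc : Even c) (hT : 0 < T) (hTo : Odd T)
    (hco : Nat.Coprime T c) :
    2 * ∑ x ∈ range c, (-1:ℤ)^x * (x*T/c : ℕ) = 1 - (T:ℤ) := by
  set N : ℕ → ℕ := fun x => x*T/c with hN
  have hsplit : ∑ x ∈ range c, (-1:ℤ)^x * (N x : ℕ)
      = ∑ x ∈ (range c).filter (fun x => Even x), ((N x : ℕ) : ℤ)
        - ∑ x ∈ (range c).filter (fun x => ¬ Even x), ((N x : ℕ) : ℤ) := by
    rw [← Finset.sum_filter_add_sum_filter_not (range c) (fun x => Even x)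
      (fun x => (-1:ℤ)^x * (N x : ℕ))]
    congr 1
    · apply Finset.sum_congr rfl
      intro x hx
      rw [(Finset.mem_filter.mp hx).2.neg_one_pow, one_mul]
    · rw [← Finset.sum_neg_distrib]
      apply Finset.sum_congr rfl
      intro x hx
      have hodd : Odd x := Nat.not_even_iff_odd.mp (Finset.mem_filter.mp hx).2
      rw [hodd.neg_one_pow]
      ring
  have hval : ∀ x ∈ (range c).filter (fun x => ¬ Even x),
      ((N x : ℕ) : ℤ) = (T:ℤ) - 1 - (N ((c-1-x)+1) : ℕ) := by
    intro x hx
    obtain ⟨hxr, hxo⟩ := Finset.mem_filter.mp hx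
    rw [Finset.mem_range] at hxr
    have hx0 : 0 < x := by
      rcases Nat.not_even_iff_odd.mp hxo with ⟨r, hr⟩; omega
    have hp := pair_id hc0 hT hco hx0 hxr
    have hcx : (c-1-x)+1 = c - x := by omega
    rw [hcx]
    simp only [hN] at hp ⊢
    omega
  have hbij : ∑ x ∈ (range c).filter (fun x => ¬ Even x), ((N x : ℕ) : ℤ)
      = ∑ y ∈ (range c).filter (fun x => Even x), ((T:ℤ) - 1 - (N (y+1) : ℕ)) := by
    rw [Finset.sum_congr rfl hval]
    refine Finset.sum_nbij' (fun x => c-1-x) (fun y => c-1-y) ?_ ?_ ?_ ?_ ?_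
    · intro x hx
      simp only [Finset.mem_filter, Finset.mem_range, Nat.even_iff] at hx ⊢
      obtain ⟨n, hn⟩ := hc
      omega
    · intro y hy
      simp only [Finset.mem_filter, Finset.mem_range, Nat.even_iff] at hy ⊢
      obtain ⟨n, hn⟩ := hc
      omega
    · intro x hx
      simp only [Finset.mem_filter, Finset.mem_range] at hx
      omega
    · intro y hy
      simp only [Finset.mem_filter, Finset.mem_range] at hy
      omega
    · intro x hx
      rfl
  have hshift : ∑ y ∈ (range c).filter (fun x => Even x), ((N (y+1) : ℕ) : ℤ)
      = ∑ x ∈ (range c).filter (fun x => ¬ Even x), ((N x : ℕ) : ℤ) := by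
    refine Finset.sum_nbij' (fun y => y+1) (fun x => x-1) ?_ ?_ ?_ ?_ ?_
    · intro y hy
      simp only [Finset.mem_filter, Finset.mem_range, Nat.even_iff] at hy ⊢
      obtain ⟨n, hn⟩ := hc
      omega
    · intro x hx
      simp only [Finset.mem_filter, Finset.mem_range, Nat.even_iff] at hx ⊢
      omega
    · intro y hy
      omega
    · intro x hx
      simp only [Finset.mem_filter, Finset.mem_range, Nat.even_iff] at hx
      omega
    · intro y hy
      rfl
  -- 2 * ∑Od = card E * (T-1)
  have hcardE : 2 * ((range c).filter (fun x => Even x)).card = c := card_filter_even hc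
  have h4 : 2 * ∑ x ∈ (range c).filter (fun x => ¬ Even x), ((N x : ℕ) : ℤ)
      = (((range c).filter (fun x => Even x)).card : ℤ) * ((T:ℤ) - 1) := by
    have := hbij
    rw [Finset.sum_sub_distrib, Finset.sum_const, hshift] at this
    rw [nsmul_eq_mul] at this
    linarith
  have hgauss : 2 * ∑ x ∈ range c, ((N x : ℕ) : ℤ) = ((c:ℤ)-1) * ((T:ℤ)-1) := by
    have hg := gauss_sum hc0 hT hco
    have : ((2 * ∑ x ∈ range c, (x*T/c) : ℕ) : ℤ) = (((c-1)*(T-1) : ℕ) : ℤ) := by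
      exact_mod_cast congrArg (Nat.cast : ℕ → ℤ) hg
    push_cast [Nat.cast_sub (by omega : 1 ≤ c), Nat.cast_sub (by omega : 1 ≤ T)] at this
    simpa [hN] using this
  have htotal : ∑ x ∈ range c, ((N x : ℕ) : ℤ)
      = ∑ x ∈ (range c).filter (fun x => Even x), ((N x : ℕ) : ℤ)
        + ∑ x ∈ (range c).filter (fun x => ¬ Even x), ((N x : ℕ) : ℤ) :=
    (Finset.sum_filter_add_sum_filter_not (range c) (fun x => Even x) _).symm
  rw [hsplit]
  have hcE : ((((range c).filter (fun x => Even x)).card : ℕ) : ℤ) * 2 = (c:ℤ) := by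
    exact_mod_cast (by omega : (((range c).filter (fun x => Even x)).card) * 2 = c)
  nlinarith [h4, hgauss, htotal, hcE]





lemma genBy_zero_mem (t : ℕ → ℕ) (n : ℕ) : 0 ∈ genBy t n :=
  ⟨fun _ => 0, by simp⟩

lemma genBy_add_mem {t : ℕ → ℕ} {n a b : ℕ} (ha : a ∈ genBy t n) (hb : b ∈ genBy t n) :
    a + b ∈ genBy t n := by
  obtain ⟨x, rfl⟩ := ha
  obtain ⟨y, rfl⟩ := hb
  refine ⟨fun i => x i + y i, ?_⟩
  rw [← Finset.sum_add_distrib]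
  apply Finset.sum_congr rfl
  intros
  dsimp only
  ring

lemma genBy_smul_mem {t : ℕ → ℕ} {n a : ℕ} (k : ℕ) (ha : a ∈ genBy t n) :
    k * a ∈ genBy t n := by
  obtain ⟨x, rfl⟩ := ha
  exact ⟨fun i => k * x i, by rw [Finset.mul_sum]; apply Finset.sum_congr rfl; intros; ring⟩

lemma genBy_single_mem {t : ℕ → ℕ} {n j : ℕ} (hj : j < n) : t j ∈ genBy t n := by
  refine ⟨fun i => if i = j then 1 else 0, ?_⟩
  rw [Finset.sum_eq_single j]
  · simp
  · intro b _ hb; simp [hb]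
  · intro h; exact absurd (Finset.mem_range.mpr hj) h

lemma genBy_mono {t : ℕ → ℕ} {n : ℕ} : genBy t n ⊆ genBy t (n+1) := by
  rintro a ⟨x, rfl⟩
  refine ⟨fun i => if i < n then x i else 0, ?_⟩
  rw [Finset.sum_range_succ]
  dsimp only
  rw [if_neg (lt_irrefl n), zero_mul, add_zero]
  apply Finset.sum_congr rfl
  intro i hi
  rw [if_pos (Finset.mem_range.mp hi)]

lemma seqD_dvd {t : ℕ → ℕ} {i j : ℕ} (h : j ≤ i) : seqD t i ∣ t j :=
  Finset.gcd_dvd (Finset.mem_range.mpr (by omega))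

lemma seqD_dvd_seqD {t : ℕ → ℕ} {i j : ℕ} (h : j ≤ i) : seqD t i ∣ seqD t j := by
  apply Finset.dvd_gcd
  intro b hb
  exact seqD_dvd (by simp only [Finset.mem_range] at hb; omega)

lemma seqD_zero (t : ℕ → ℕ) : seqD t 0 = t 0 := by
  simp [seqD, Finset.range_one]

lemma seqD_pos {t : ℕ → ℕ} (ht : 0 < t 0) (i : ℕ) : 0 < seqD t i := by
  rcases Nat.eq_zero_or_pos (seqD t i) with h | h
  · exfalso
    have := seqD_dvd (t := t) (i := i) (j := 0) (Nat.zero_le i)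
    rw [h] at this
    simp only [Nat.zero_dvd] at this
    omega
  · exact h

lemma seqD_succ (t : ℕ → ℕ) (n : ℕ) : seqD t (n+1) = Nat.gcd (t (n+1)) (seqD t n) := by
  unfold seqD
  rw [Finset.range_add_one, Finset.gcd_insert]
  rfl

lemma seqC_mul_seqD {t : ℕ → ℕ} (ht : 0 < t 0) (j : ℕ) (hj : 1 ≤ j) :
    seqC t j * seqD t j = seqD t (j-1) := by
  unfold seqC
  exact Nat.div_mul_cancel (seqD_dvd_seqD (by omega))

-- telescoping product
lemma prod_seqC {t : ℕ → ℕ} (ht : 0 < t 0) (n : ℕ) :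
    (∏ i ∈ Icc 1 n, seqC t i) * seqD t n = t 0 := by
  induction n with
  | zero => simp [seqD_zero]
  | succ m ih =>
    have h1 : Icc 1 (m+1) = insert (m+1) (Icc 1 m) := by
      ext a
      simp only [Finset.mem_Icc, Finset.mem_insert]
      omega
    rw [h1, Finset.prod_insert (by simp), mul_comm (seqC t (m+1)) _, mul_assoc,
      seqC_mul_seqD ht (m+1) (by omega)]
    simpa using ih

noncomputable def gsum (T : Set ℕ) : ℤ := ∑ᶠ x ∈ T, (-1:ℤ)^x

lemma gsum_finite {T : Set ℕ} (hT : T.Finite) : gsum T = ∑ x ∈ hT.toFinset, (-1:ℤ)^x := by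
  rw [gsum, ← finsum_mem_coe_finset, hT.coe_toFinset]

lemma gsum_coe (s : Finset ℕ) : gsum (↑s) = ∑ x ∈ s, (-1:ℤ)^x := by
  rw [gsum, finsum_mem_coe_finset]

lemma gsum_union {A B : Set ℕ} (hA : A.Finite) (hB : B.Finite) (hd : Disjoint A B) :
    gsum (A ∪ B) = gsum A + gsum B :=
  finsum_mem_union hd hA hB

lemma gsum_empty : gsum ∅ = 0 := by
  rw [gsum, finsum_mem_empty]

section Scale

variable {t : ℕ → ℕ} {n : ℕ}

lemma scale_genBy (c : ℕ) (t' : ℕ → ℕ) (j : ℕ) (hdvd : ∀ i < j, t i = c * t' i) :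
    genBy t j = (fun s => c * s) '' genBy t' j := by
  ext a
  constructor
  · rintro ⟨x, rfl⟩
    refine ⟨∑ i ∈ Finset.range j, x i * t' i, ⟨x, rfl⟩, ?_⟩
    dsimp only
    rw [Finset.mul_sum]
    apply Finset.sum_congr rfl
    intro i hi
    rw [hdvd i (Finset.mem_range.mp hi)]
    ring
  · rintro ⟨s, ⟨x, rfl⟩, rfl⟩
    refine ⟨x, ?_⟩
    dsimp only
    rw [Finset.mul_sum]
    apply Finset.sum_congr rfl
    intro i hi
    rw [hdvd i (Finset.mem_range.mp hi)]
    ring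

lemma scale_seqD (c : ℕ) (t' : ℕ → ℕ) (j : ℕ) (hdvd : ∀ i ≤ j, t i = c * t' i) :
    seqD t j = c * seqD t' j := by
  unfold seqD
  rw [Finset.gcd_congr rfl (g := fun i => c * t' i)
    (fun a ha => hdvd a (by simp only [Finset.mem_range] at ha; omega))]
  rw [Finset.gcd_mul_left]
  simp

lemma np_sub' {a b : ℕ} (h : b ≤ a) : ((-1:ℤ))^(a-b) = (-1)^a * (-1)^b := by
  have h1 := np_sub h
  have h2 := np_mul_self b
  calc ((-1:ℤ))^(a-b) = ((-1:ℤ))^(a-b) * ((-1)^b * (-1)^b) := by rw [h2, mul_one]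
    _ = (((-1:ℤ))^(a-b) * (-1)^b) * (-1)^b := by ring
    _ = (-1)^a * (-1)^b := by rw [h1]

lemma step (t : ℕ → ℕ) (n : ℕ) (htel : IsTelescopic t (n+1)) (hgcd : seqD t (n+1) = 1)
    (hG'fin : ((genBy (fun i => t i / seqD t n) (n+1))ᶜ : Set ℕ).Finite) :
    ((genBy t (n+2))ᶜ : Set ℕ).Finite ∧
    2 * gsum ((genBy t (n+2))ᶜ)
      = 2 * (∑ r ∈ range (seqD t n), (-1:ℤ)^(r * t (n+1))) *
          (∑ g ∈ hG'fin.toFinset, ((-1:ℤ)^(seqD t n))^g)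
        + ∑ r ∈ range (seqD t n), (-1:ℤ)^(r * t (n+1)) *
            (2 * ∑ j ∈ Icc 1 (r * t (n+1) / seqD t n), ((-1:ℤ)^(seqD t n))^j) := by
  set c := seqD t n with hc
  set T := t (n+1) with hT
  set t' : ℕ → ℕ := fun i => t i / c with ht'
  set S' := genBy t' (n+1) with hS'
  have h00 : 0 < t 0 := htel.1 0 (by omega)
  have hc0 : 0 < c := seqD_pos h00 n
  have hT0 : 0 < T := htel.1 (n+1) le_rfl
  have hco : Nat.Coprime T c := by
    have h1 := seqD_succ t n
    rw [hgcd] at h1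
    exact h1.symm
  have hdvd : ∀ i < n+1, t i = c * t' i := by
    intro i hi
    exact (Nat.mul_div_cancel' (seqD_dvd (by omega))).symm
  have hSc : genBy t (n+1) = (fun s => c * s) '' S' := scale_genBy c t' (n+1) hdvd
  have hcC : seqC t (n+1) = c := by
    unfold seqC
    rw [hgcd]
    simp [hc]
  have hcT : c * T ∈ genBy t (n+1) := by
    have := htel.2 (n+1) (by omega) le_rfl
    rwa [hcC] at this
  -- membership characterization
  have mem_iff : ∀ a, a ∈ genBy t (n+2) ↔ ∃ r, r < c ∧ ∃ s, s ∈ S' ∧ a = r*T + c*s := by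
    intro a
    constructor
    · rintro ⟨x, rfl⟩
      rw [Finset.sum_range_succ]
      set b := ∑ i ∈ Finset.range (n+1), x i * t i with hb
      have hbmem : b ∈ genBy t (n+1) := ⟨x, rfl⟩
      obtain ⟨q, r, hrc, hqr⟩ : ∃ q r, r < c ∧ x (n+1) = c*q + r :=
        ⟨x (n+1)/c, x (n+1) % c, Nat.mod_lt _ hc0, by rw [Nat.div_add_mod]⟩
      have hmem2 : b + q * (c*T) ∈ genBy t (n+1) :=
        genBy_add_mem hbmem (genBy_smul_mem q hcT)
      rw [hSc] at hmem2
      obtain ⟨s, hs, hcs⟩ := hmem2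
      refine ⟨r, hrc, s, hs, ?_⟩
      have : b + x (n+1) * T = r * T + (b + q * (c*T)) := by rw [hqr]; ring
      rw [this, ← hcs]
    · rintro ⟨r, hrc, s, hs, rfl⟩
      apply genBy_add_mem
      · exact genBy_smul_mem r (genBy_single_mem (by omega))
      · apply genBy_mono
        rw [hSc]
        exact ⟨s, hs, rfl⟩
  have uniq_r : ∀ r r', r < c → r' < c → r*T % c = r'*T % c → r = r' := by
    intro r r' hr hr' hmod
    have : r ≡ r' [MOD c] := Nat.ModEq.cancel_right_of_coprime hco.symm hmod
    unfold Nat.ModEq at this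
    rwa [Nat.mod_eq_of_lt hr, Nat.mod_eq_of_lt hr'] at this
  have exists_r : ∀ a, ∃ r, r < c ∧ a % c = r*T % c := by
    intro a
    rcases Nat.lt_or_ge 1 c with hc1 | hc1
    · obtain ⟨u, -, hu⟩ := Nat.exists_mul_mod_eq_one_of_coprime hco hc1
      refine ⟨(a * u) % c, Nat.mod_lt _ hc0, ?_⟩
      have h1 : (a * u) % c * T % c = a * u * T % c := by
        rw [Nat.mod_mul_mod]
      have h3 : a * u * T % c = a % c := by
        have he : a * u * T = a * (T * u) := by ring
        rw [he, Nat.mul_mod, hu, mul_one, Nat.mod_mod_of_dvd _ dvd_rfl]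
      rw [h1, h3]
    · interval_cases c
      exact ⟨0, by omega, by omega⟩
  -- decomposition
  set A : Set ℕ := (fun p : ℕ × ℕ => p.1 * T + c * p.2) '' ((Set.Iio c) ×ˢ (S'ᶜ)) with hA
  set Bf : Finset ℕ :=
    (range c).biUnion (fun r => (Icc 1 (r*T/c)).image (fun j => r*T - c*j)) with hBf
  have memBf : ∀ a, a ∈ Bf ↔ ∃ r, r < c ∧ ∃ j, 1 ≤ j ∧ j ≤ r*T/c ∧ a = r*T - c*j := by
    intro a
    simp only [hBf, Finset.mem_biUnion, Finset.mem_image, Finset.mem_Icc, Finset.mem_range]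
    constructor
    · rintro ⟨r, hr, j, ⟨hj1, hj2⟩, rfl⟩
      exact ⟨r, hr, j, hj1, hj2, rfl⟩
    · rintro ⟨r, hr, j, hj1, hj2, rfl⟩
      exact ⟨r, hr, j, ⟨hj1, hj2⟩, rfl⟩
  have hkey : ∀ r r' s s', r < c → r' < c → r*T + c*s = r'*T + c*s' → r = r' ∧ s = s' := by
    intro r r' s s' hr hr' heq
    have hm1 : (r*T + c*s) % c = r*T % c := Nat.add_mul_mod_self_left _ _ _
    have hm2 : (r'*T + c*s') % c = r'*T % c := Nat.add_mul_mod_self_left _ _ _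
    have hrr : r = r' := uniq_r _ _ hr hr' (by rw [← hm1, ← hm2, heq])
    subst hrr
    have h2 : c*s = c*s' := by omega
    exact ⟨rfl, Nat.eq_of_mul_eq_mul_left hc0 h2⟩
  have hjle_mul : ∀ r j, j ≤ r*T/c → c*j ≤ r*T := by
    intro r j hj
    have := (Nat.le_div_iff_mul_le hc0).mp hj
    have h2 : j*c = c*j := Nat.mul_comm _ _
    omega
  have hcompl : (genBy t (n+2))ᶜ = A ∪ ↑Bf := by
    ext a
    simp only [Set.mem_compl_iff, Set.mem_union]
    constructor
    · intro hna
      obtain ⟨r, hr, hmod⟩ := exists_r a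
      by_cases hle : r*T ≤ a
      · left
        have hdvd2 : c ∣ a - r*T := (Nat.modEq_iff_dvd' hle).mp (by
          unfold Nat.ModEq; omega)
        obtain ⟨s, hs⟩ := hdvd2
        have has : a = r*T + c*s := by omega
        have hsG : s ∈ S'ᶜ := by
          intro hsS'
          exact hna ((mem_iff a).mpr ⟨r, hr, s, hsS', has⟩)
        exact ⟨(r, s), ⟨Set.mem_Iio.mpr hr, hsG⟩, has.symm⟩
      · right
        have hlt : a < r*T := by omega
        have hdvd2 : c ∣ r*T - a := (Nat.modEq_iff_dvd' (le_of_lt hlt)).mp (by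
          unfold Nat.ModEq; omega)
        obtain ⟨j, hj⟩ := hdvd2
        have hj1 : 1 ≤ j := by
          rcases Nat.eq_zero_or_pos j with h | h
          · subst h; simp at hj; omega
          · exact h
        have hjle : j ≤ r*T/c := by
          rw [Nat.le_div_iff_mul_le hc0]
          have h2 : j*c = c*j := Nat.mul_comm _ _
          omega
        rw [Finset.mem_coe, memBf]
        exact ⟨r, hr, j, hj1, hjle, by omega⟩
    · rintro (⟨⟨r, s⟩, ⟨hr, hs⟩, rfl⟩ | hB)
      · intro hmem
        obtain ⟨r', hr', s', hs', heq⟩ := (mem_iff _).mp hmem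
        obtain ⟨hrr, hss⟩ := hkey r r' s s' (Set.mem_Iio.mp hr) hr' heq
        exact hs (hss ▸ hs')
      · rw [Finset.mem_coe, memBf] at hB
        obtain ⟨r, hr, j, hj1, hjle, rfl⟩ := hB
        intro hmem
        obtain ⟨r', hr', s', hs', heq⟩ := (mem_iff _).mp hmem
        have hcj : c*j ≤ r*T := hjle_mul r j hjle
        have ha : r*T - c*j + c*j = r*T := by omega
        have hmods : (r*T - c*j) % c = r*T % c := by
          conv_rhs => rw [← ha]
          rw [Nat.add_mul_mod_self_left]
        have hmods' : (r*T - c*j) % c = r'*T % c := by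
          rw [heq, Nat.add_mul_mod_self_left]
        have hrr : r' = r := uniq_r _ _ hr' hr (by rw [← hmods', hmods])
        subst hrr
        have hz : c*s' + c*j = 0 := by omega
        have : c*j = 0 := by omega
        rcases Nat.mul_eq_zero.mp this with h | h
        · omega
        · omega
  have hAfin : A.Finite := ((Set.finite_Iio c).prod hG'fin).image _
  have hfin : ((genBy t (n+2))ᶜ : Set ℕ).Finite := by
    rw [hcompl]
    exact hAfin.union Bf.finite_toSet
  refine ⟨hfin, ?_⟩
  -- A as a finset
  set Afin : Finset ℕ := ((range c) ×ˢ hG'fin.toFinset).image (fun p => p.1*T + c*p.2)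
    with hAfinset
  have hAco : A = ↑Afin := by
    rw [hA, hAfinset, Finset.coe_image, Finset.coe_product, Finset.coe_range,
      Set.Finite.coe_toFinset]
  have hdisjAB : Disjoint A (↑Bf : Set ℕ) := by
    rw [Set.disjoint_left]
    rintro a ⟨⟨r, s⟩, ⟨hr, hs⟩, rfl⟩ hB
    rw [Finset.mem_coe, memBf] at hB
    obtain ⟨r', hr', j, hj1, hjle, heq⟩ := hB
    have hcj : c*j ≤ r'*T := hjle_mul r' j hjle
    have hmods : (r*T + c*s) % c = r*T % c := Nat.add_mul_mod_self_left _ _ _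
    have ha : r'*T - c*j + c*j = r'*T := by omega
    have hmods2 : (r'*T - c*j) % c = r'*T % c := by
      conv_rhs => rw [← ha]
      rw [Nat.add_mul_mod_self_left]
    dsimp only at heq
    have hrr : r = r' := uniq_r _ _ (Set.mem_Iio.mp hr) hr' (by
      rw [← hmods, heq, hmods2])
    subst hrr
    have : c*s + c*j = 0 := by omega
    have hcj0 : c*j = 0 := by omega
    rcases Nat.mul_eq_zero.mp hcj0 with h | h <;> omega
  have hgs : gsum ((genBy t (n+2))ᶜ) = gsum A + gsum ↑Bf := by
    rw [hcompl]
    exact gsum_union hAfin Bf.finite_toSet hdisjAB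
  have gA : gsum A
      = (∑ r ∈ range c, (-1:ℤ)^(r*T)) * (∑ g ∈ hG'fin.toFinset, ((-1:ℤ)^c)^g) := by
    rw [hAco, gsum_coe, hAfinset]
    rw [Finset.sum_image (by
      rintro ⟨r, g⟩ hp ⟨r', g'⟩ hq heq
      simp only [Finset.mem_coe, Finset.mem_product, Finset.mem_range] at hp hq
      dsimp only at heq
      obtain ⟨h1, h2⟩ := hkey r r' g g' hp.1 hq.1 heq
      exact Prod.ext h1 h2)]
    rw [Finset.sum_product]
    have hterm : ∀ r ∈ range c, ∑ g ∈ hG'fin.toFinset, (-1:ℤ)^(r*T + c*g)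
        = (-1:ℤ)^(r*T) * ∑ g ∈ hG'fin.toFinset, ((-1:ℤ)^c)^g := by
      intro r _
      rw [Finset.mul_sum]
      apply Finset.sum_congr rfl
      intro g _
      rw [pow_add, pow_mul (-1:ℤ) c g]
    rw [Finset.sum_congr rfl hterm, ← Finset.sum_mul]
  have gB : gsum ↑Bf
      = ∑ r ∈ range c, (-1:ℤ)^(r*T) * (∑ j ∈ Icc 1 (r*T/c), ((-1:ℤ)^c)^j) := by
    rw [gsum_coe, hBf]
    rw [Finset.sum_biUnion (by
      intro r hr r' hr' hne
      simp only [Function.onFun]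
      rw [Finset.disjoint_left]
      intro a ha ha'
      simp only [Finset.mem_image, Finset.mem_Icc] at ha ha'
      obtain ⟨j, ⟨hj1, hjle⟩, rfl⟩ := ha
      obtain ⟨j', ⟨hj1', hjle'⟩, heq⟩ := ha'
      simp only [Finset.mem_coe, Finset.mem_range] at hr hr'
      have hcj : c*j ≤ r*T := hjle_mul r j hjle
      have hcj' : c*j' ≤ r'*T := hjle_mul r' j' hjle'
      have e1 : r*T - c*j + c*j = r*T := by omega
      have e2 : r'*T - c*j' + c*j' = r'*T := by omega
      have hmods : (r*T - c*j) % c = r*T % c := by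
        conv_rhs => rw [← e1]; rw [Nat.add_mul_mod_self_left]
      have hmods' : (r'*T - c*j') % c = r'*T % c := by
        conv_rhs => rw [← e2]; rw [Nat.add_mul_mod_self_left]
      exact hne (uniq_r _ _ hr hr' (by rw [← hmods, ← heq, hmods'])))]
    apply Finset.sum_congr rfl
    intro r hr
    rw [Finset.sum_image (by
      intro j hj j' hj' heq
      simp only [Finset.mem_coe, Finset.mem_Icc] at hj hj'
      have hcj : c*j ≤ r*T := hjle_mul r j hj.2
      have hcj' : c*j' ≤ r*T := hjle_mul r j' hj'.2
      have : c*j = c*j' := by dsimp only at heq; omega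
      exact Nat.eq_of_mul_eq_mul_left hc0 this)]
    rw [Finset.mul_sum]
    apply Finset.sum_congr rfl
    intro j hj
    simp only [Finset.mem_Icc] at hj
    rw [np_sub' (hjle_mul r j hj.2), pow_mul (-1:ℤ) c j]
  rw [hgs, gA, gB]
  have hr2 : ∀ r ∈ range c, (-1:ℤ)^(r*T) * (2 * ∑ j ∈ Icc 1 (r*T/c), ((-1:ℤ)^c)^j)
      = 2 * ((-1:ℤ)^(r*T) * ∑ j ∈ Icc 1 (r*T/c), ((-1:ℤ)^c)^j) := by
    intro r _
    ring
  rw [Finset.sum_congr rfl hr2, ← Finset.mul_sum]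
  ring

lemma transfer (t : ℕ → ℕ) (n : ℕ) (htel : IsTelescopic t (n+1)) (hgcd : seqD t (n+1) = 1) :
    IsTelescopic (fun i => t i / seqD t n) n ∧ seqD (fun i => t i / seqD t n) n = 1 ∧
    (∀ j, 1 ≤ j → j ≤ n → seqC (fun i => t i / seqD t n) j = seqC t j) := by
  set c := seqD t n with hc
  set t' : ℕ → ℕ := fun i => t i / c with ht'
  have h00 : 0 < t 0 := htel.1 0 (by omega)
  have hc0 : 0 < c := seqD_pos h00 n
  have hdvd : ∀ i, i ≤ n → t i = c * t' i := by
    intro i hi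
    exact (Nat.mul_div_cancel' (seqD_dvd (by omega))).symm
  have hsD : ∀ j, j ≤ n → seqD t j = c * seqD t' j := by
    intro j hj
    exact scale_seqD c t' j (fun i hi => hdvd i (by omega))
  have hgcd' : seqD t' n = 1 := by
    have := hsD n le_rfl
    have h2 : c * seqD t' n = c * 1 := by omega
    exact Nat.eq_of_mul_eq_mul_left hc0 h2
  have hpos' : ∀ i, i ≤ n → 0 < t' i := by
    intro i hi
    have h1 := htel.1 i (by omega)
    have h2 := hdvd i hi
    rcases Nat.eq_zero_or_pos (t' i) with h | h
    · rw [h, mul_zero] at h2; omega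
    · exact h
  have hseqC : ∀ j, 1 ≤ j → j ≤ n → seqC t' j = seqC t j := by
    intro j hj1 hjn
    unfold seqC
    have e1 : seqD t (j-1) = c * seqD t' (j-1) := hsD (j-1) (by omega)
    have e2 : seqD t j = c * seqD t' j := hsD j hjn
    rw [e1, e2, Nat.mul_div_mul_left _ _ hc0]
  refine ⟨⟨fun i hi => hpos' i hi, ?_⟩, hgcd', hseqC⟩
  intro j hj1 hjn
  have htc := htel.2 j hj1 (by omega)
  have hgb : genBy t j = (fun s => c * s) '' genBy t' j :=
    scale_genBy c t' j (fun i hi => hdvd i (by omega))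
  rw [hgb] at htc
  obtain ⟨s, hs, hcs⟩ := htc
  dsimp only at hcs
  have heq : seqC t j * t j = c * (seqC t j * t' j) := by
    rw [hdvd j hjn]; ring
  have hss : seqC t j * t' j = s := Nat.eq_of_mul_eq_mul_left hc0 (by rw [← heq, hcs])
  rw [hseqC j hj1 hjn, hss]
  exact hs

lemma aux : ∀ n : ℕ, ∀ t : ℕ → ℕ, IsTelescopic t n → seqD t n = 1 →
    ∀ m, m ≤ n → Odd (t m) → (∀ i < m, Even (t i)) →
    ((genBy t (n+1))ᶜ : Set ℕ).Finite ∧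
      2 * (t 0 : ℤ) * gsum ((genBy t (n+1))ᶜ)
        = (t 0 : ℤ) - (if m = 0 then 1 else (seqC t m : ℤ)) * (t m : ℤ) *
            ∏ i ∈ (range (n+1)).filter (fun i => Even (t i)),
              (if i = 0 then 1 else (seqC t i : ℤ)) := by
  intro n
  induction n with
  | zero =>
    intro t htel hgcd m hm hmodd hmmin
    interval_cases m
    have ht0 : t 0 = 1 := by rw [← seqD_zero t]; exact hgcd
    have hmem : ∀ a, a ∈ genBy t 1 := fun a =>
      ⟨fun _ => a, by rw [Finset.sum_range_one, ht0, mul_one]⟩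
    have hcompl : ((genBy t 1)ᶜ : Set ℕ) = ∅ := by
      ext a
      simp [hmem a]
    rw [hcompl]
    refine ⟨Set.finite_empty, ?_⟩
    have hfil : (range 1).filter (fun i => Even (t i)) = ∅ := by
      rw [Finset.range_one]
      rw [Finset.filter_singleton]
      rw [if_neg]
      rw [ht0]
      decide
    rw [hfil, gsum_empty, ht0]
    simp
  | succ n ih =>
    intro t htel hgcd m hm hmodd hmmin
    obtain ⟨htel', hgcd', hseqC⟩ := transfer t n htel hgcd
    set c := seqD t n with hhc
    set T := t (n+1) with hhT
    set t' : ℕ → ℕ := fun i => t i / c with hht'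
    have h00 : 0 < t 0 := htel.1 0 (by omega)
    have hc0 : 0 < c := seqD_pos h00 n
    have hT0 : 0 < T := htel.1 (n+1) le_rfl
    have hcop : Nat.Coprime T c := by
      have h1 := seqD_succ t n
      rw [hgcd] at h1
      exact h1.symm
    have hdvd : ∀ i, i ≤ n → t i = c * t' i := by
      intro i hi
      exact (Nat.mul_div_cancel' (seqD_dvd (by omega))).symm
    have hcC : seqC t (n+1) = c := by
      unfold seqC
      rw [hgcd]
      simp [hhc]
    -- find m' for t'
    have hex : ∃ i, i ≤ n ∧ Odd (t' i) := by
      by_contra h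
      push_neg at h
      have h2 : 2 ∣ seqD t' n := by
        apply Finset.dvd_gcd
        intro i hi
        simp only [Finset.mem_range] at hi
        have := h i (by omega)
        rw [Nat.odd_iff] at this
        omega
      rw [hgcd'] at h2
      omega
    haveI : DecidablePred (fun i => Odd (t' i)) := fun i => decidable_of_iff _ (Nat.odd_iff).symm
    have hex' : ∃ i, Odd (t' i) := ⟨hex.choose, hex.choose_spec.2⟩
    set m' := Nat.find hex' with hm'
    have hm'le : m' ≤ n := le_trans (Nat.find_le hex.choose_spec.2) hex.choose_spec.1
    have hm'odd : Odd (t' m') := Nat.find_spec hex'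
    have hm'min : ∀ i < m', Even (t' i) := fun i hi =>
      Nat.not_odd_iff_even.mp (Nat.find_min hex' hi)
    obtain ⟨hG'fin, IHform⟩ := ih t' htel' hgcd' m' hm'le hm'odd hm'min
    obtain ⟨hfin, hstep⟩ := step t n htel hgcd hG'fin
    refine ⟨hfin, ?_⟩
    rcases Nat.even_or_odd c with hce | hcodd
    · -- c even : m = n+1, T odd
      have hTodd : Odd T := by
        rcases Nat.even_or_odd T with h | h
        · exfalso
          have h2 : 2 ∣ Nat.gcd T c := Nat.dvd_gcd h.two_dvd hce.two_dvd
          rw [hcop] at h2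
          omega
        · exact h
      have hmeq : m = n+1 := by
        by_contra hne
        have hm2 : m ≤ n := by omega
        obtain ⟨k, hk⟩ := dvd_trans hce.two_dvd (seqD_dvd hm2)
        exact (Nat.not_odd_iff_even.mpr ⟨k, by omega⟩) hmodd
      -- simplify hstep
      have hnegc : ((-1:ℤ))^c = 1 := hce.neg_one_pow
      rw [hnegc] at hstep
      simp only [one_pow, Finset.sum_const, nsmul_eq_mul, mul_one, Nat.card_Icc,
        Nat.add_sub_cancel] at hstep
      have hsum0 : ∑ r ∈ range c, (-1:ℤ)^(r*T) = 0 := by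
        rw [Finset.sum_congr rfl (fun r _ => np_odd_mul hTodd r), sum_range_neg_one,
          if_pos hce]
      have h2 : ∀ r ∈ range c, (-1:ℤ)^(r*T) * (2*((r*T/c : ℕ):ℤ))
          = 2*((-1)^r * ((r*T/c : ℕ):ℤ)) := by
        intro r _
        rw [np_odd_mul hTodd]
        ring
      rw [hsum0, Finset.sum_congr rfl h2, ← Finset.mul_sum] at hstep
      have hae := arith_even hc0 hce hT0 hTodd hcop
      have hfin2 : 2 * gsum ((genBy t (n+2))ᶜ) = 1 - (T:ℤ) := by
        rw [hstep]
        rw [hae]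
        ring
      -- RHS
      have hfil : (range (n+2)).filter (fun i => Even (t i)) = range (n+1) := by
        ext i
        simp only [Finset.mem_filter, Finset.mem_range]
        constructor
        · rintro ⟨h1, h2⟩
          by_contra h3
          have hieq : i = n+1 := by omega
          subst hieq
          exact (Nat.not_odd_iff_even.mpr h2) hTodd
        · intro h1
          refine ⟨by omega, ?_⟩
          obtain ⟨k, hk⟩ := dvd_trans hce.two_dvd (seqD_dvd (by omega : i ≤ n))
          exact ⟨k, by omega⟩
      have hins : range (n+1) = insert 0 (Icc 1 n) := by
        ext i
        simp only [Finset.mem_insert, Finset.mem_Icc, Finset.mem_range]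
        omega
      have hprod1 : ∏ i ∈ range (n+1), (if i = 0 then (1:ℤ) else (seqC t i : ℤ))
          = ∏ i ∈ Icc 1 n, (seqC t i : ℤ) := by
        rw [hins, Finset.prod_insert (by simp), if_pos rfl, one_mul]
        apply Finset.prod_congr rfl
        intro i hi
        simp only [Finset.mem_Icc] at hi
        rw [if_neg (by omega)]
      have hpcZ : (∏ i ∈ Icc 1 n, (seqC t i : ℤ)) * (c:ℤ) = (t 0 : ℤ) := by
        have := congrArg (Nat.cast : ℕ → ℤ) (prod_seqC h00 n)
        push_cast at this
        exact this
      subst hmeq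
      rw [if_neg (by omega), hfil, hprod1, hcC]
      linear_combination (t 0 : ℤ) * hfin2 + (T:ℤ) * hpcZ
    · -- c odd
      have hmle : m ≤ n := by
        by_contra h
        have h2 : 2 ∣ c := by
          apply Finset.dvd_gcd
          intro i hi
          simp only [Finset.mem_range] at hi
          exact (hmmin i (by omega)).two_dvd
        rw [Nat.odd_iff] at hcodd
        omega
      -- m' = m : both are minimal odd indices
      have hmm' : m' = m := by
        have hto : Odd (t' m) := by
          have hdm := hdvd m hmle
          rcases Nat.even_or_odd (t' m) with he | ho
          · exfalso
            have hev : Even (t m) := by rw [hdm]; exact he.mul_left c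
            exact (Nat.not_odd_iff_even.mpr hev) hmodd
          · exact ho
        have h1 : m' ≤ m := Nat.find_le hto
        rcases Nat.lt_or_ge m' m with h2 | h2
        · exfalso
          have hev := hmmin m' h2
          rw [hdvd m' (by omega)] at hev
          rw [Nat.even_mul] at hev
          rcases hev with he | he
          · exact (Nat.not_odd_iff_even.mpr he) hcodd
          · exact (Nat.not_odd_iff_even.mpr he) hm'odd
        · omega
      subst hmm'
      -- transport IH to t
      have e0 : (t 0 : ℤ) = (c:ℤ) * (t' 0 : ℤ) := by exact_mod_cast hdvd 0 (by omega)
      have em : (t m' : ℤ) = (c:ℤ) * (t' m' : ℤ) := by exact_mod_cast hdvd m' hm'le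
      have hXC : (if m' = 0 then (1:ℤ) else (seqC t' m' : ℤ))
          = (if m' = 0 then 1 else (seqC t m' : ℤ)) := by
        by_cases h : m' = 0
        · simp [h]
        · rw [if_neg h, if_neg h, hseqC m' (by omega) hm'le]
      have hfil' : (range (n+1)).filter (fun i => Even (t' i))
          = (range (n+1)).filter (fun i => Even (t i)) := by
        apply Finset.filter_congr
        intro i hi
        simp only [Finset.mem_range] at hi
        rw [hdvd i (by omega), Nat.even_mul]
        simp [Nat.even_iff, Nat.odd_iff.mp hcodd]
      have hC' : ∀ i ∈ (range (n+1)).filter (fun i => Even (t i)),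
          (if i = 0 then (1:ℤ) else (seqC t' i : ℤ))
            = (if i = 0 then 1 else (seqC t i : ℤ)) := by
        intro i hi
        simp only [Finset.mem_filter, Finset.mem_range] at hi
        by_cases h : i = 0
        · simp [h]
        · rw [if_neg h, if_neg h, hseqC i (by omega) (by omega)]
      rw [hXC, hfil', Finset.prod_congr rfl hC'] at IHform
      set X : ℤ := (if m' = 0 then (1:ℤ) else (seqC t m' : ℤ)) with hX
      set P : ℤ := ∏ i ∈ (range (n+1)).filter (fun i => Even (t i)),
        (if i = 0 then (1:ℤ) else (seqC t i : ℤ)) with hP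
      have IH2 : 2 * (t 0 : ℤ) * gsum ((genBy t' (n+1))ᶜ)
          = (t 0 : ℤ) - X * (t m' : ℤ) * P := by
        linear_combination (c:ℤ) * IHform + (2 * gsum ((genBy t' (n+1))ᶜ) - 1) * e0
          + (X * P) * em
      -- simplify hstep
      have hnegc : ((-1:ℤ))^c = -1 := hcodd.neg_one_pow
      rw [hnegc, ← gsum_finite hG'fin] at hstep
      have h2 : ∀ r ∈ range c, (-1:ℤ)^(r*T) * (2 * ∑ j ∈ Icc 1 (r*T/c), (-1:ℤ)^j)
          = (-1:ℤ)^(r*T) * ((-1)^(r*T/c) - 1) := by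
        intro r _
        rw [sum_Icc_neg_one]
      rw [Finset.sum_congr rfl h2, arith_odd hc0 hcodd hT0 hcop] at hstep
      rcases Nat.even_or_odd T with hTe | hTo
      · -- T even
        have hsum : ∑ r ∈ range c, (-1:ℤ)^(r*T) = (c:ℤ) := by
          rw [Finset.sum_congr rfl (fun r _ => np_even_mul hTe r), Finset.sum_const,
            Finset.card_range, nsmul_eq_mul, mul_one]
        rw [hsum, if_pos hTe] at hstep
        have hfil2 : (range (n+2)).filter (fun i => Even (t i))
            = insert (n+1) ((range (n+1)).filter (fun i => Even (t i))) := by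
          ext i
          simp only [Finset.mem_filter, Finset.mem_insert, Finset.mem_range]
          constructor
          · rintro ⟨h1, h3⟩
            rcases Nat.lt_or_ge i (n+1) with h4 | h4
            · exact Or.inr ⟨h4, h3⟩
            · exact Or.inl (by omega)
          · rintro (rfl | ⟨h1, h3⟩)
            · exact ⟨by omega, hTe⟩
            · exact ⟨by omega, h3⟩
        have hnotmem : n+1 ∉ (range (n+1)).filter (fun i => Even (t i)) := by simp
        rw [hfil2, Finset.prod_insert hnotmem, if_neg (by omega), hcC]
        linear_combination (t 0 : ℤ) * hstep + (c:ℤ) * IH2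
      · -- T odd
        have hsum : ∑ r ∈ range c, (-1:ℤ)^(r*T) = 1 := by
          rw [Finset.sum_congr rfl (fun r _ => np_odd_mul hTo r), sum_range_neg_one,
            if_neg (Nat.not_odd_iff_even.not.mp (not_not.mpr hcodd))]
        rw [hsum, if_neg (Nat.not_odd_iff_even.not.mp (not_not.mpr hTo))] at hstep
        have hfil2 : (range (n+2)).filter (fun i => Even (t i))
            = (range (n+1)).filter (fun i => Even (t i)) := by
          ext i
          simp only [Finset.mem_filter, Finset.mem_range]
          constructor
          · rintro ⟨h1, h3⟩
            refine ⟨?_, h3⟩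
            by_contra h4
            have : i = n+1 := by omega
            subst this
            exact (Nat.not_odd_iff_even.mpr h3) hTo
          · rintro ⟨h1, h3⟩
            exact ⟨by omega, h3⟩
        rw [hfil2]
        linear_combination (t 0 : ℤ) * hstep + IH2



lemma count_gsum {T : Set ℕ} (h : T.Finite) :
    (countOdd T : ℤ) - (countEven T : ℤ) = - gsum T := by
  classical
  have hO : countOdd T = (h.toFinset.filter (fun x => Odd x)).card := by
    rw [countOdd, ← Set.ncard_coe_finset]
    congr 1
    ext x
    simp [Set.Finite.mem_toFinset]
  have hE : countEven T = (h.toFinset.filter (fun x => Even x)).card := by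
    rw [countEven, ← Set.ncard_coe_finset]
    congr 1
    ext x
    simp [Set.Finite.mem_toFinset]
  rw [gsum_finite h, hO, hE]
  rw [← Finset.sum_filter_add_sum_filter_not h.toFinset (fun x => Even x) (fun x => (-1:ℤ)^x)]
  have h1 : ∑ x ∈ h.toFinset.filter (fun x => Even x), (-1:ℤ)^x
      = (h.toFinset.filter (fun x => Even x)).card := by
    rw [Finset.sum_congr rfl (fun x hx => (Finset.mem_filter.mp hx).2.neg_one_pow)]
    simp
  have h2 : ∑ x ∈ h.toFinset.filter (fun x => ¬ Even x), (-1:ℤ)^x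
      = -((h.toFinset.filter (fun x => Odd x)).card : ℤ) := by
    have hf : h.toFinset.filter (fun x => ¬ Even x) = h.toFinset.filter (fun x => Odd x) := by
      apply Finset.filter_congr
      intro x _
      exact Nat.not_even_iff_odd
    rw [hf, Finset.sum_congr rfl (fun x hx => (Finset.mem_filter.mp hx).2.neg_one_pow)]
    simp
  rw [h1, h2]
  ring

/-- Main theorem: for `S` free generated by telescopic `T = (t_0, …, t_k)` with
`gcd T = 1`, `c_0 = 1`, `m` the least index with `t_m` odd, and
`I = {0 ≤ i ≤ k : t_i even}`, we have
`O(G(S)) - E(G(S)) = -1/2 + (c_m t_m)/(2 t_0) · ∏_{i ∈ I} c_i`, i.e.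
`2 t_0 (O(G(S)) - E(G(S))) = -t_0 + c_m t_m ∏_{i ∈ I} c_i`. -/
theorem main_parity_free (t : ℕ → ℕ) (k : ℕ) (htel : IsTelescopic t k)
    (hgcd : seqD t k = 1)
    (m : ℕ) (hmk : m ≤ k) (hmodd : Odd (t m)) (hmmin : ∀ i < m, Even (t i)) :
    2 * (t 0 : ℤ) * ((countOdd (genBy t (k + 1))ᶜ : ℤ) - (countEven (genBy t (k + 1))ᶜ : ℤ))
      = -(t 0 : ℤ) + (if m = 0 then 1 else (seqC t m : ℤ)) * (t m : ℤ) *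
          ∏ i ∈ (Finset.range (k + 1)).filter (fun i => Even (t i)),
            (if i = 0 then 1 else (seqC t i : ℤ)) := by
  obtain ⟨hfin, hform⟩ := aux k t htel hgcd m hmk hmodd hmmin
  have hcount := count_gsum hfin
  linear_combination (-1 : ℤ) * hform + 2 * (t 0 : ℤ) * hcount
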